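/- arXiv:0801.0281 — 3 statements merged into one kernel-verified Lean document; each statement's English description precedes it below -/
import Mathlib

section
/- Let U = [-1,1] and consider the one-dimensional control problem ẋ = u, x(0) = x⁰, minimizing J = ∫₀¹ (x(t)² − u(t)²) dt over measurable controls u: [0,1] → [-1,1]. The function V(x,τ) defined piecewise by: V(x,τ) = (1/3)[x³ − (x+τ−1)³] + τ − 1 if x+τ ≥ 1; (1/3)x³ + τ − 1 if x+τ < 1 and x ≥ 0; −(1/3)x³ + τ − 1 if −x+τ < 1 and x < 0; (1/3)[−x³ − (−x+τ−1)³] + τ − 1 if −x+τ ≥ 1, is a C¹ function on ℝ × (0,1) satisfying the Hamilton–Jacobi–Bellman equation −∂V/∂τ + |∂V/∂x| − x² + 1 = 0 on ℝ × (0,1) with V(x,1) = 0. -/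
open Set Filter

noncomputable def pcube (s : ℝ) : ℝ := (max s 0) ^ 3

lemma pcube_hasDerivAt (s : ℝ) : HasDerivAt pcube (3 * (max s 0) ^ 2) s := by
  rcases lt_trichotomy s 0 with hs | rfl | hs
  · have hv : (3 : ℝ) * (max s 0) ^ 2 = 0 := by rw [max_eq_right hs.le]; ring
    rw [hv]
    have hc : HasDerivAt (fun _ : ℝ => (0 : ℝ)) 0 s := hasDerivAt_const s 0
    apply hc.congr_of_eventuallyEq
    filter_upwards [Iio_mem_nhds hs] with t ht
    simp [pcube, max_eq_right (le_of_lt (mem_Iio.mp ht))]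
  · rw [hasDerivAt_iff_tendsto_slope]
    have hv : (3 : ℝ) * (max (0:ℝ) 0) ^ 2 = 0 := by simp
    rw [hv]
    have hb : ∀ t : ℝ, ‖slope pcube 0 t‖ ≤ t ^ 2 := by
      intro t
      rcases le_or_gt t 0 with ht | ht
      · have h1 : pcube t = 0 := by simp [pcube, max_eq_right ht]
        have h2 : pcube 0 = 0 := by simp [pcube]
        rw [slope_def_field, h1, h2]
        simp [sq_nonneg t]
      · have h1 : pcube t = t ^ 3 := by simp [pcube, max_eq_left ht.le]
        have h2 : pcube 0 = 0 := by simp [pcube]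
        rw [slope_def_field, h1, h2, sub_zero, sub_zero]
        have h3 : t ^ 3 / t = t ^ 2 := by field_simp
        rw [h3, Real.norm_eq_abs, abs_of_nonneg (sq_nonneg t)]
    have hg : Tendsto (fun t : ℝ => t ^ 2) (nhdsWithin (0:ℝ) {(0:ℝ)}ᶜ) (nhds 0) := by
      have h : Tendsto (fun t : ℝ => t ^ 2) (nhds 0) (nhds 0) := by
        simpa using (continuous_pow 2).tendsto (0:ℝ)
      exact h.mono_left nhdsWithin_le_nhds
    exact squeeze_zero_norm hb hg
  · have hv : (3 : ℝ) * (max s 0) ^ 2 = 3 * s ^ 2 := by rw [max_eq_left hs.le]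
    rw [hv]
    have hp : HasDerivAt (fun t : ℝ => t ^ 3) (3 * s ^ 2) s := by
      simpa using hasDerivAt_pow 3 s
    apply hp.congr_of_eventuallyEq
    filter_upwards [Ioi_mem_nhds hs] with t ht
    simp [pcube, max_eq_left (le_of_lt (mem_Ioi.mp ht))]

lemma pcube_contDiff : ContDiff ℝ 1 pcube := by
  rw [contDiff_one_iff_deriv]
  refine ⟨fun s => (pcube_hasDerivAt s).differentiableAt, ?_⟩
  have h : deriv pcube = fun s => 3 * (max s 0) ^ 2 :=
    funext fun s => (pcube_hasDerivAt s).deriv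
  rw [h]
  exact (continuous_const.mul (((continuous_id.max continuous_const)).pow 2))

/-- The piecewise function `V` solves the HJB equation
`−V_τ + |V_x| − x² + 1 = 0` on `ℝ × (0,1)` classically (being `C¹` there),
with the terminal condition `V(x,1) = 0`, for the problem `ẋ = u`, `u ∈ [-1,1]`,
cost `∫₀¹ (x² − u²) dt`. -/
theorem hjb_example_classical_solution :
    let V : ℝ → ℝ → ℝ := fun x τ =>
      if 1 ≤ x + τ then (x ^ 3 - (x + τ - 1) ^ 3) / 3 + τ - 1
      else if 0 ≤ x then x ^ 3 / 3 + τ - 1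
      else if -x + τ < 1 then -(x ^ 3) / 3 + τ - 1
      else (-(x ^ 3) - (-x + τ - 1) ^ 3) / 3 + τ - 1
    ContDiffOn ℝ 1 (fun p : ℝ × ℝ => V p.1 p.2) (univ ×ˢ Ioo (0 : ℝ) 1) ∧
    (∀ x : ℝ, ∀ τ ∈ Ioo (0 : ℝ) 1,
      -(deriv (fun s => V x s) τ) + |deriv (fun y => V y τ) x| - x ^ 2 + 1 = 0) ∧
    (∀ x : ℝ, V x 1 = 0) := by
  intro V
  set F : ℝ → ℝ → ℝ := fun x τ =>
    (pcube x + pcube (-x) - pcube (x + τ - 1) - pcube (-x + τ - 1)) / 3 + τ - 1 with hFdef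
  have key : ∀ x τ : ℝ, τ ≤ 1 → V x τ = F x τ := by
    intro x τ hτ
    simp only [V, F, pcube]
    split_ifs with h1 h2 h3
    · rw [max_eq_left (by linarith : (0:ℝ) ≤ x), max_eq_right (by linarith : -x ≤ 0),
        max_eq_left (by linarith : (0:ℝ) ≤ x + τ - 1),
        max_eq_right (by linarith : -x + τ - 1 ≤ 0)]
      ring
    · rw [max_eq_left h2, max_eq_right (by linarith : -x ≤ 0),
        max_eq_right (by linarith : x + τ - 1 ≤ 0),
        max_eq_right (by linarith : -x + τ - 1 ≤ 0)]
      ring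
    · push_neg at h2
      rw [max_eq_right h2.le, max_eq_left (by linarith : (0:ℝ) ≤ -x),
        max_eq_right (by linarith : x + τ - 1 ≤ 0),
        max_eq_right (by linarith : -x + τ - 1 ≤ 0)]
      ring
    · push_neg at h2 h3
      rw [max_eq_right h2.le, max_eq_left (by linarith : (0:ℝ) ≤ -x),
        max_eq_right (by linarith : x + τ - 1 ≤ 0),
        max_eq_left (by linarith : (0:ℝ) ≤ -x + τ - 1)]
      ring
  have hF : ContDiff ℝ 1 (fun p : ℝ × ℝ => F p.1 p.2) := by
    simp only [hFdef]
    apply ContDiff.sub _ contDiff_const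
    apply ContDiff.add _ contDiff_snd
    apply ContDiff.div_const
    exact (((pcube_contDiff.comp contDiff_fst).add
        (pcube_contDiff.comp contDiff_fst.neg)).sub
        (pcube_contDiff.comp ((contDiff_fst.add contDiff_snd).sub contDiff_const))).sub
        (pcube_contDiff.comp ((contDiff_fst.neg.add contDiff_snd).sub contDiff_const))
  refine ⟨?_, ?_, ?_⟩
  · apply (hF.contDiffOn).congr
    rintro ⟨x, τ⟩ hp
    have hτ : τ ∈ Ioo (0:ℝ) 1 := (mem_prod.mp hp).2
    exact key x τ hτ.2.le
  · intro x τ hτ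
    obtain ⟨hτ0, hτ1⟩ := hτ
    -- derivative in τ
    have hA : HasDerivAt (fun s : ℝ => x + s - 1) 1 τ := by
      simpa using ((hasDerivAt_id τ).const_add x).sub_const 1
    have hB : HasDerivAt (fun s : ℝ => -x + s - 1) 1 τ := by
      simpa using ((hasDerivAt_id τ).const_add (-x)).sub_const 1
    have H1 : HasDerivAt (fun s => pcube (x + s - 1)) (3 * (max (x + τ - 1) 0) ^ 2) τ := by
      simpa [Function.comp_def] using (pcube_hasDerivAt (x + τ - 1)).comp τ hA
    have H2 : HasDerivAt (fun s => pcube (-x + s - 1)) (3 * (max (-x + τ - 1) 0) ^ 2) τ := by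
      simpa [Function.comp_def] using (pcube_hasDerivAt (-x + τ - 1)).comp τ hB
    have Hτ : HasDerivAt (fun s => F x s)
        ((0 - 3 * (max (x + τ - 1) 0) ^ 2 - 3 * (max (-x + τ - 1) 0) ^ 2) / 3 + 1) τ := by
      exact ((((((hasDerivAt_const τ (pcube x + pcube (-x))).sub H1).sub H2).div_const 3).add
        (hasDerivAt_id τ)).sub_const 1)
    have hdτ : deriv (fun s => V x s) τ
        = (0 - 3 * (max (x + τ - 1) 0) ^ 2 - 3 * (max (-x + τ - 1) 0) ^ 2) / 3 + 1 := by
      have hev : (fun s => V x s) =ᶠ[nhds τ] (fun s => F x s) := by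
        filter_upwards [Iio_mem_nhds hτ1] with s hs
        exact key x s hs.le
      rw [hev.deriv_eq, Hτ.deriv]
    -- derivative in x
    have hA' : HasDerivAt (fun y : ℝ => y + τ - 1) 1 x := by
      simpa using ((hasDerivAt_id x).add_const τ).sub_const 1
    have hB' : HasDerivAt (fun y : ℝ => -y + τ - 1) (-1) x := by
      have := (((hasDerivAt_id x).neg).add_const τ).sub_const 1
      simpa using this
    have G1 : HasDerivAt (fun y => pcube y) (3 * (max x 0) ^ 2) x := pcube_hasDerivAt x
    have G2 : HasDerivAt (fun y => pcube (-y)) (3 * (max (-x) 0) ^ 2 * (-1)) x := by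
      simpa [Function.comp_def] using (pcube_hasDerivAt (-x)).comp x ((hasDerivAt_id x).neg)
    have G3 : HasDerivAt (fun y => pcube (y + τ - 1)) (3 * (max (x + τ - 1) 0) ^ 2) x := by
      simpa [Function.comp_def] using (pcube_hasDerivAt (x + τ - 1)).comp x hA'
    have G4 : HasDerivAt (fun y => pcube (-y + τ - 1)) (3 * (max (-x + τ - 1) 0) ^ 2 * (-1)) x := by
      simpa [Function.comp_def] using (pcube_hasDerivAt (-x + τ - 1)).comp x hB'
    have Hx : HasDerivAt (fun y => F y τ)
        ((3 * (max x 0) ^ 2 + 3 * (max (-x) 0) ^ 2 * (-1) - 3 * (max (x + τ - 1) 0) ^ 2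
          - 3 * (max (-x + τ - 1) 0) ^ 2 * (-1)) / 3) x := by
      exact (((((G1.add G2).sub G3).sub G4).div_const 3).add_const τ).sub_const 1
    have hdx : deriv (fun y => V y τ) x
        = (3 * (max x 0) ^ 2 + 3 * (max (-x) 0) ^ 2 * (-1) - 3 * (max (x + τ - 1) 0) ^ 2
          - 3 * (max (-x + τ - 1) 0) ^ 2 * (-1)) / 3 := by
      have hfun : (fun y => V y τ) = (fun y => F y τ) := funext fun y => key y τ hτ1.le
      rw [hfun, Hx.deriv]
    rw [hdτ, hdx]
    rcases le_or_gt 0 x with hx | hx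
    · rw [max_eq_left hx, max_eq_right (by linarith : -x ≤ 0),
        max_eq_right (by linarith : -x + τ - 1 ≤ 0)]
      set m := max (x + τ - 1) 0 with hm
      have hm0 : 0 ≤ m := le_max_right _ _
      have hm1 : m ≤ x := max_le (by linarith) hx
      have habs : |(3 * x ^ 2 + 3 * 0 ^ 2 * (-1) - 3 * m ^ 2 - 3 * 0 ^ 2 * (-1)) / 3|
          = (3 * x ^ 2 + 3 * 0 ^ 2 * (-1) - 3 * m ^ 2 - 3 * 0 ^ 2 * (-1)) / 3 := by
        apply abs_of_nonneg
        nlinarith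
      rw [habs]
      ring
    · rw [max_eq_right hx.le, max_eq_left (by linarith : (0:ℝ) ≤ -x),
        max_eq_right (by linarith : x + τ - 1 ≤ 0)]
      set m := max (-x + τ - 1) 0 with hm
      have hm0 : 0 ≤ m := le_max_right _ _
      have hm1 : m ≤ -x := max_le (by linarith) (by linarith)
      have habs : |(3 * 0 ^ 2 + 3 * (-x) ^ 2 * (-1) - 3 * 0 ^ 2 - 3 * m ^ 2 * (-1)) / 3|
          = -((3 * 0 ^ 2 + 3 * (-x) ^ 2 * (-1) - 3 * 0 ^ 2 - 3 * m ^ 2 * (-1)) / 3) := by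
        apply abs_of_nonpos
        nlinarith
      rw [habs]
      ring
  · intro x
    rw [key x 1 le_rfl]
    simp only [F]
    have e1 : x + 1 - 1 = x := by ring
    have e2 : -x + 1 - 1 = -x := by ring
    rw [e1, e2]
    ring
end

section
/- For the control problem ẋ = u, u(t) ∈ [-1,1], with cost J(x⁰; u) = ∫₀¹ (x(t)² − u(t)²) dt and initial data x(τ) = 0 with τ ∈ [0,1), the infimum of the cost over all measurable controls equals τ − 1, but no admissible control attains this infimum (there is no optimal control). -/
open Set Real MeasureTheory

noncomputable def NOCd (a s : ℝ) : ℝ := (1 - a ^ 2) / (1 - a ^ 2 * Real.sin s ^ 2)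
noncomputable def NOCg (a s : ℝ) : ℝ := a * Real.cos s / Real.sqrt (1 - a ^ 2 * Real.sin s ^ 2)

lemma NOC_denom_pos {a : ℝ} (ha : a ^ 2 < 1) (s : ℝ) : 0 < 1 - a ^ 2 * Real.sin s ^ 2 := by
  nlinarith [Real.sin_sq_le_one s, sq_nonneg a, sq_nonneg (Real.sin s)]

lemma NOC_denom_ge {a : ℝ} (s : ℝ) : 1 - a ^ 2 ≤ 1 - a ^ 2 * Real.sin s ^ 2 := by
  nlinarith [Real.sin_sq_le_one s, sq_nonneg a]

lemma NOCd_nonneg {a : ℝ} (ha : a ^ 2 < 1) (s : ℝ) : 0 ≤ NOCd a s :=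
  div_nonneg (by nlinarith) (NOC_denom_pos ha s).le

lemma NOCd_le_one {a : ℝ} (ha : a ^ 2 < 1) (s : ℝ) : NOCd a s ≤ 1 := by
  rw [NOCd, div_le_one (NOC_denom_pos ha s)]
  exact NOC_denom_ge s

lemma NOCd_cont {a : ℝ} (ha : a ^ 2 < 1) : Continuous (NOCd a) := by
  apply continuous_const.div (by fun_prop)
  exact fun s => (NOC_denom_pos ha s).ne'

lemma NOCd_periodic (a : ℝ) : Function.Periodic (NOCd a) π := by
  intro s; simp [NOCd, Real.sin_add_pi]

lemma NOCg_sq {a : ℝ} (ha : a ^ 2 < 1) (s : ℝ) : NOCg a s ^ 2 = 1 - NOCd a s := by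
  have hd := NOC_denom_pos ha s
  rw [NOCg, NOCd, div_pow, Real.sq_sqrt hd.le, mul_pow]
  field_simp
  nlinarith [Real.sin_sq_add_cos_sq s]

lemma NOCg_mem {a : ℝ} (ha : a ^ 2 < 1) (s : ℝ) : NOCg a s ∈ Icc (-1 : ℝ) 1 := by
  have h2 : NOCg a s ^ 2 ≤ 1 := by
    rw [NOCg_sq ha s]; nlinarith [NOCd_nonneg ha s]
  constructor <;> nlinarith [sq_nonneg (NOCg a s - 1), sq_nonneg (NOCg a s + 1)]

lemma NOCg_cont {a : ℝ} (ha : a ^ 2 < 1) : Continuous (NOCg a) := by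
  apply (continuous_const.mul Real.continuous_cos).div (by fun_prop)
  exact fun s => (Real.sqrt_pos.2 (NOC_denom_pos ha s)).ne'

lemma NOC_hasDerivAt {a : ℝ} (ha0 : 0 ≤ a) (ha : a ^ 2 < 1) (s : ℝ) :
    HasDerivAt (fun s => Real.arcsin (a * Real.sin s)) (NOCg a s) s := by
  have habs : |a * Real.sin s| < 1 := by
    rw [abs_mul]
    have h1 : |a| = a := abs_of_nonneg ha0
    nlinarith [Real.abs_sin_le_one s, abs_nonneg (Real.sin s), abs_nonneg a,
      sq_abs a, sq_abs (Real.sin s)]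
  have h1 : a * Real.sin s ≠ -1 := by cases' abs_lt.1 habs with h _; linarith
  have h2 : a * Real.sin s ≠ 1 := by cases' abs_lt.1 habs with _ h; linarith
  have hinp : HasDerivAt (fun s => a * Real.sin s) (a * Real.cos s) s :=
    (Real.hasDerivAt_sin s).const_mul a
  have := (Real.hasDerivAt_arcsin h1 h2).comp s hinp
  refine this.congr_deriv ?_
  rw [NOCg, mul_pow]
  ring

lemma NOCd_intable (a : ℝ) (ha : a ^ 2 < 1) (c d : ℝ) :
    IntervalIntegrable (NOCd a) volume c d :=
  (NOCd_cont ha).intervalIntegrable c d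

lemma NOC_half_integral {a : ℝ} (ha0 : 0 < a) (ha : a ^ 2 < 1)
    (hδ : Real.sqrt (1 - a ^ 2) ≤ π / 2) :
    ∫ s in (-(π/2))..(π/2), NOCd a s ≤ (π + 2) * Real.sqrt (1 - a ^ 2) := by
  set b : ℝ := 1 - a ^ 2 with hbdef
  have hb : 0 < b := by simp only [hbdef]; linarith
  set δ : ℝ := Real.sqrt b with hδdef
  have hδ0 : 0 < δ := Real.sqrt_pos.2 hb
  have hb2 : δ ^ 2 = b := Real.sq_sqrt hb.le
  -- endpoint bound
  have hend : ∀ c : ℝ, ∫ s in c..(c + δ), NOCd a s ≤ δ := by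
    intro c
    have h1 : ∫ s in c..(c + δ), NOCd a s ≤ ∫ s in c..(c + δ), (1 : ℝ) := by
      apply intervalIntegral.integral_mono_on (by linarith) (NOCd_intable a ha c _)
        (intervalIntegrable_const)
      exact fun s _ => NOCd_le_one ha s
    simpa using h1.trans (by simp)
  -- middle bound via FTC
  have hmid : ∫ s in (-(π/2) + δ)..(π/2 - δ), NOCd a s ≤ π * δ := by
    set F : ℝ → ℝ := fun s => δ * Real.arctan (δ * Real.tan s) with hF
    have hder : ∀ s ∈ uIcc (-(π/2) + δ) (π/2 - δ), HasDerivAt F (NOCd a s) s := by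
      intro s hs
      rw [uIcc_of_le (by linarith)] at hs
      have hcos : 0 < Real.cos s := by
        apply Real.cos_pos_of_mem_Ioo
        constructor
        · linarith [hs.1]
        · linarith [hs.2]
      have htan : HasDerivAt Real.tan (1 / Real.cos s ^ 2) s :=
        Real.hasDerivAt_tan hcos.ne'
      have harctan : HasDerivAt Real.arctan (1 / (1 + (δ * Real.tan s) ^ 2)) (δ * Real.tan s) :=
        Real.hasDerivAt_arctan (δ * Real.tan s)
      have := ((harctan.comp s ((htan.const_mul δ))).const_mul δ)
      refine this.congr_deriv ?_
      have hc2 : (0:ℝ) < Real.cos s ^ 2 := by positivity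
      have hX : (1 + (δ * Real.tan s) ^ 2) * Real.cos s ^ 2 = 1 - a ^ 2 * Real.sin s ^ 2 := by
        have hs2 := Real.sin_sq_add_cos_sq s
        have h3 : (δ * Real.tan s) ^ 2 = δ ^ 2 * (Real.sin s ^ 2 / Real.cos s ^ 2) := by
          rw [Real.tan_eq_sin_div_cos]; ring
        rw [h3, add_mul, one_mul, mul_assoc, div_mul_cancel₀ _ hc2.ne', hb2, hbdef]
        linear_combination hs2
      have hXpos : (0:ℝ) < 1 + (δ * Real.tan s) ^ 2 := by positivity
      rw [NOCd, ← hX, ← hbdef, ← hb2]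
      field_simp
    have heq : ∫ s in (-(π/2) + δ)..(π/2 - δ), NOCd a s
        = F (π/2 - δ) - F (-(π/2) + δ) :=
      intervalIntegral.integral_eq_sub_of_hasDerivAt hder
        ((NOCd_cont ha).intervalIntegrable _ _)
    rw [heq, hF]
    have h1 : Real.arctan (δ * Real.tan (π/2 - δ)) < π / 2 := Real.arctan_lt_pi_div_two _
    have h2 : -(π / 2) < Real.arctan (δ * Real.tan (-(π/2) + δ)) :=
      Real.neg_pi_div_two_lt_arctan _
    nlinarith
  -- combine
  have hi1 := NOCd_intable a ha (-(π/2)) (-(π/2) + δ)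
  have hi2 := NOCd_intable a ha (-(π/2) + δ) (π/2 - δ)
  have hi3 := NOCd_intable a ha (π/2 - δ) (π/2)
  have hsplit : ∫ s in (-(π/2))..(π/2), NOCd a s
      = (∫ s in (-(π/2))..(-(π/2) + δ), NOCd a s)
        + ((∫ s in (-(π/2) + δ)..(π/2 - δ), NOCd a s)
          + ∫ s in (π/2 - δ)..(π/2), NOCd a s) := by
    rw [intervalIntegral.integral_add_adjacent_intervals hi2 hi3,
      intervalIntegral.integral_add_adjacent_intervals hi1 (hi2.trans hi3)]
  rw [hsplit]
  have he1 := hend (-(π/2))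
  have he2 := hend (π/2 - δ)
  rw [sub_add_cancel] at he2
  nlinarith

lemma NOC_int_zero_pi {a : ℝ} (ha0 : 0 < a) (ha : a ^ 2 < 1)
    (hδ : Real.sqrt (1 - a ^ 2) ≤ π / 2) :
    ∫ s in (0:ℝ)..π, NOCd a s ≤ (π + 2) * Real.sqrt (1 - a ^ 2) := by
  have h := (NOCd_periodic a).intervalIntegral_add_eq 0 (-(π/2))
  rw [zero_add] at h
  have h2 : -(π/2) + π = π/2 := by ring
  rw [h2] at h
  rw [h]
  exact NOC_half_integral ha0 ha hδ

lemma NOC_int_bound {a : ℝ} (ha0 : 0 < a) (ha : a ^ 2 < 1)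
    (hδ : Real.sqrt (1 - a ^ 2) ≤ π / 2) (n : ℕ) (L : ℝ) (hL0 : 0 ≤ L)
    (hL : L ≤ n * π) :
    ∫ s in (0:ℝ)..L, NOCd a s ≤ n * ((π + 2) * Real.sqrt (1 - a ^ 2)) := by
  have h1 : ∫ s in (0:ℝ)..L, NOCd a s ≤ ∫ s in (0:ℝ)..(n * π), NOCd a s := by
    apply intervalIntegral.integral_mono_interval le_rfl hL0 hL
      (Filter.Eventually.of_forall fun s => NOCd_nonneg ha s) (NOCd_intable a ha _ _)
  have h2 : ∫ s in (0:ℝ)..(n * π), NOCd a s = (n : ℕ) • ∫ s in (0:ℝ)..π, NOCd a s := by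
    have := (NOCd_periodic a).intervalIntegral_add_zsmul_eq (n : ℤ) 0
      (fun t₁ t₂ => NOCd_intable a ha t₁ t₂)
    rw [zero_add] at this
    simpa using this
  rw [h2] at h1
  refine h1.trans ?_
  rw [nsmul_eq_mul]
  apply mul_le_mul_of_nonneg_left (NOC_int_zero_pi ha0 ha hδ) (Nat.cast_nonneg n)

lemma NOC_exists (τ ε : ℝ) (hτ : τ ∈ Ico (0:ℝ) 1) (hε : 0 < ε) :
    ∃ u x : ℝ → ℝ, Measurable u ∧ (∀ t, u t ∈ Icc (-1:ℝ) 1) ∧ x τ = 0 ∧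
      (∀ t ∈ Icc τ 1, HasDerivAt x (u t) t) ∧
      (∫ t in τ..1, (x t ^ 2 - u t ^ 2)) < τ - 1 + ε := by
  obtain ⟨hτ0, hτ1⟩ := hτ
  obtain ⟨δ, hδ0, hδhalf, hδε⟩ : ∃ δ : ℝ, 0 < δ ∧ δ ≤ 1/2 ∧ δ ≤ ε/16 :=
    ⟨min (1/2) (ε/16), lt_min (by norm_num) (by linarith), min_le_left _ _,
      min_le_right _ _⟩
  obtain ⟨a, ha0, ha, hsq⟩ : ∃ a : ℝ, 0 < a ∧ a ^ 2 < 1 ∧ Real.sqrt (1 - a ^ 2) = δ := by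
    refine ⟨Real.sqrt (1 - δ^2), Real.sqrt_pos.2 (by nlinarith), ?_, ?_⟩
    · rw [Real.sq_sqrt (by nlinarith : (0:ℝ) ≤ 1 - δ^2)]; nlinarith
    · rw [Real.sq_sqrt (by nlinarith : (0:ℝ) ≤ 1 - δ^2),
        show (1:ℝ) - (1 - δ^2) = δ^2 by ring, Real.sqrt_sq hδ0.le]
  obtain ⟨n, hn1, hnsq⟩ : ∃ n : ℕ, 1 ≤ n ∧ 8/ε ≤ (n:ℝ)^2 := by
    refine ⟨⌈Real.sqrt (8/ε)⌉₊ + 1, Nat.le_add_left 1 _, ?_⟩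
    have h1 : Real.sqrt (8/ε) ≤ ((⌈Real.sqrt (8/ε)⌉₊ + 1 : ℕ) : ℝ) := by
      push_cast
      linarith [Nat.le_ceil (Real.sqrt (8/ε))]
    calc 8/ε = Real.sqrt (8/ε) ^ 2 := (Real.sq_sqrt (by positivity)).symm
    _ ≤ _ := by nlinarith [Real.sqrt_nonneg (8/ε)]
  have hn0 : (0:ℝ) < n := by exact_mod_cast hn1
  set inp : ℝ → ℝ := fun t => (n:ℝ) * t + -((n:ℝ) * τ) with hinpdef
  set u : ℝ → ℝ := fun t => NOCg a (inp t) with hudef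
  set x : ℝ → ℝ := fun t => (n:ℝ)⁻¹ * Real.arcsin (a * Real.sin (inp t)) with hxdef
  have hinp_cont : Continuous inp := by fun_prop
  refine ⟨u, x, ((NOCg_cont ha).comp hinp_cont).measurable,
    fun t => NOCg_mem ha (inp t), ?_, ?_, ?_⟩
  · simp [hxdef, hinpdef]
  · intro t _
    have hin : HasDerivAt inp ((n:ℝ)) t := by
      exact (((hasDerivAt_id t).const_mul (n:ℝ)).add_const (-((n:ℝ)*τ))).congr_deriv (by simp)
    have h1 := ((NOC_hasDerivAt ha0.le ha (inp t)).comp t hin).const_mul ((n:ℝ)⁻¹)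
    refine h1.congr_deriv ?_
    field_simp [hudef]
    rfl
  · -- the integral estimate
    have hx_cont : Continuous x := by
      apply continuous_const.mul
      exact Real.continuous_arcsin.comp (continuous_const.mul (Real.continuous_sin.comp hinp_cont))
    have hu_cont : Continuous u := (NOCg_cont ha).comp hinp_cont
    have hcomp_cont : Continuous fun t => NOCd a (inp t) := (NOCd_cont ha).comp hinp_cont
    have hsplit : (∫ t in τ..1, (x t ^ 2 - u t ^ 2))
        = (∫ t in τ..1, x t ^ 2) - ∫ t in τ..1, u t ^ 2 :=
      intervalIntegral.integral_sub ((hx_cont.pow 2).intervalIntegrable _ _)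
        ((hu_cont.pow 2).intervalIntegrable _ _)
    have hI1 : (∫ t in τ..1, x t ^ 2) ≤ 4 / (n:ℝ)^2 := by
      have hb : ∀ t ∈ Icc τ 1, x t ^ 2 ≤ ((n:ℝ)⁻¹ * (π/2))^2 := by
        intro t _
        have h1 := Real.arcsin_mem_Icc (a * Real.sin (inp t))
        obtain ⟨hl, hr⟩ := h1
        have hn' : (0:ℝ) < (n:ℝ)⁻¹ := by positivity
        rw [hxdef]
        simp only [mul_pow]
        have : Real.arcsin (a * Real.sin (inp t)) ^ 2 ≤ (π/2)^2 := by nlinarith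
        nlinarith [sq_nonneg ((n:ℝ)⁻¹)]
      calc (∫ t in τ..1, x t ^ 2)
          ≤ ∫ t in τ..1, ((n:ℝ)⁻¹ * (π/2))^2 := by
            apply intervalIntegral.integral_mono_on hτ1.le
              ((hx_cont.pow 2).intervalIntegrable _ _) intervalIntegrable_const hb
        _ = (1 - τ) * ((n:ℝ)⁻¹ * (π/2))^2 := by simp [smul_eq_mul]
        _ ≤ 4 / (n:ℝ)^2 := by
            have hpi : π ≤ 4 := by linarith [Real.pi_le_four]
            rw [le_div_iff₀ (by positivity)]
            have hinv : ((n:ℝ)⁻¹ * (π/2))^2 * ((n:ℝ))^2 = (π/2)^2 := by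
              field_simp
            nlinarith [hinv, Real.pi_pos, sq_nonneg (π/2)]
    have hI2 : (∫ t in τ..1, u t ^ 2)
        = (1 - τ) - ∫ t in τ..1, NOCd a (inp t) := by
      have h1 : (∫ t in τ..1, u t ^ 2) = ∫ t in τ..1, (1 - NOCd a (inp t)) := by
        apply intervalIntegral.integral_congr
        intro t _
        exact NOCg_sq ha (inp t)
      rw [h1, intervalIntegral.integral_sub intervalIntegrable_const
        (hcomp_cont.intervalIntegrable _ _)]
      simp [smul_eq_mul]
    have hI3 : (∫ t in τ..1, NOCd a (inp t)) ≤ (π + 2) * δ := by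
      have hc : (n:ℝ) ≠ 0 := hn0.ne'
      have h1 : (∫ t in τ..1, NOCd a (inp t))
          = (n:ℝ)⁻¹ • ∫ s in ((n:ℝ)*τ + -((n:ℝ)*τ))..((n:ℝ)*1 + -((n:ℝ)*τ)), NOCd a s := by
        rw [hinpdef]
        exact intervalIntegral.integral_comp_mul_add (NOCd a) hc _
      have he1 : (n:ℝ)*τ + -((n:ℝ)*τ) = 0 := by ring
      have he2 : (n:ℝ)*1 + -((n:ℝ)*τ) = (n:ℝ)*(1-τ) := by ring
      rw [he1, he2] at h1
      rw [h1, smul_eq_mul]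
      have hδpi : Real.sqrt (1 - a ^ 2) ≤ π / 2 := by
        rw [hsq]; linarith [Real.pi_gt_three]
      have h2 := NOC_int_bound ha0 ha hδpi n ((n:ℝ)*(1-τ))
        (mul_nonneg hn0.le (by linarith))
        (mul_le_mul_of_nonneg_left (by linarith [Real.pi_gt_three]) hn0.le)
      rw [hsq] at h2
      calc (n:ℝ)⁻¹ * ∫ s in (0:ℝ)..((n:ℝ)*(1-τ)), NOCd a s
          ≤ (n:ℝ)⁻¹ * ((n:ℝ) * ((π + 2) * δ)) := by
            apply mul_le_mul_of_nonneg_left h2 (by positivity)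
        _ = (π + 2) * δ := by field_simp
    -- combine
    have hn4 : 4 / (n:ℝ)^2 ≤ ε/2 := by
      rw [div_le_iff₀ (by positivity)]
      have h8 : 8 ≤ ε * (n:ℝ)^2 := by
        rw [div_le_iff₀ hε] at hnsq
        linarith
      linarith
    have hpi4 : (π + 2) * δ ≤ 6 * δ := by
      have h1 : π * δ ≤ 4 * δ := mul_le_mul_of_nonneg_right Real.pi_le_four hδ0.le
      linarith
    rw [hsplit, hI2]
    have : 6 * δ ≤ 6 * (ε/16) := by linarith
    linarith

/-- For the problem `ẋ = u`, `u(t) ∈ [-1,1]`, `x(τ) = 0` with `τ ∈ [0,1)`, and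
cost `∫_τ^1 (x² − u²) dt`, the infimum of the cost over all measurable admissible
controls equals `τ − 1`, but no admissible control attains it. -/
theorem no_optimal_control (τ : ℝ) (hτ : τ ∈ Ico (0 : ℝ) 1) :
    IsGLB {J : ℝ | ∃ u x : ℝ → ℝ, Measurable u ∧ (∀ t, u t ∈ Icc (-1 : ℝ) 1) ∧
        x τ = 0 ∧ (∀ t ∈ Icc τ 1, HasDerivAt x (u t) t) ∧
        J = ∫ t in τ..1, (x t ^ 2 - u t ^ 2)} (τ - 1) ∧
    (τ - 1) ∉ {J : ℝ | ∃ u x : ℝ → ℝ, Measurable u ∧ (∀ t, u t ∈ Icc (-1 : ℝ) 1) ∧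
        x τ = 0 ∧ (∀ t ∈ Icc τ 1, HasDerivAt x (u t) t) ∧
        J = ∫ t in τ..1, (x t ^ 2 - u t ^ 2)} := by
  have hτ1 : τ ≤ 1 := hτ.2.le
  have hI : uIcc τ 1 = Icc τ 1 := uIcc_of_le hτ1
  -- basic integrability facts for any admissible pair
  have hfacts : ∀ u x : ℝ → ℝ, Measurable u → (∀ t, u t ∈ Icc (-1 : ℝ) 1) →
      (∀ t ∈ Icc τ 1, HasDerivAt x (u t) t) →
      IntervalIntegrable (fun t => x t ^ 2) volume τ 1 ∧
      IntervalIntegrable (fun t => u t ^ 2) volume τ 1 ∧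
      ContinuousOn x (Icc τ 1) := by
    intro u x hu_meas hu_mem hderiv
    have hxc : ContinuousOn x (Icc τ 1) :=
      fun t ht => ((hderiv t ht).continuousAt).continuousWithinAt
    refine ⟨?_, ?_, hxc⟩
    · apply ContinuousOn.intervalIntegrable
      rw [hI]; exact hxc.pow 2
    · apply (intervalIntegrable_const (c := (1:ℝ))).mono_fun
      · exact ((hu_meas.pow_const 2).aestronglyMeasurable)
      · apply Filter.Eventually.of_forall
        intro t
        obtain ⟨h1, h2⟩ := hu_mem t
        simp only [Real.norm_eq_abs, norm_one]
        rw [abs_of_nonneg (sq_nonneg _)]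
        nlinarith
  -- lower bound
  have hlb : ∀ J ∈ {J : ℝ | ∃ u x : ℝ → ℝ, Measurable u ∧
      (∀ t, u t ∈ Icc (-1 : ℝ) 1) ∧ x τ = 0 ∧ (∀ t ∈ Icc τ 1, HasDerivAt x (u t) t) ∧
      J = ∫ t in τ..1, (x t ^ 2 - u t ^ 2)}, τ - 1 ≤ J := by
    rintro J ⟨u, x, hu_meas, hu_mem, hx0, hderiv, rfl⟩
    obtain ⟨hx2i, hu2i, hxc⟩ := hfacts u x hu_meas hu_mem hderiv
    have hlow : ∀ t ∈ Icc τ 1, (-1:ℝ) ≤ x t ^ 2 - u t ^ 2 := by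
      intro t _
      obtain ⟨h1, h2⟩ := hu_mem t
      nlinarith [sq_nonneg (x t)]
    calc τ - 1 = ∫ _ in τ..1, (-1:ℝ) := by
          rw [intervalIntegral.integral_const, smul_eq_mul]; ring
      _ ≤ ∫ t in τ..1, (x t ^ 2 - u t ^ 2) :=
          intervalIntegral.integral_mono_on hτ1 intervalIntegrable_const
            (hx2i.sub hu2i) hlow
  constructor
  · constructor
    · exact hlb
    · intro c hc
      by_contra hlt
      push_neg at hlt
      obtain ⟨u, x, hu_meas, hu_mem, hx0, hderiv, hJ⟩ :=
        NOC_exists τ (c - (τ - 1)) hτ (by linarith)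
      have hmem : (∫ t in τ..1, (x t ^ 2 - u t ^ 2)) ∈ {J : ℝ | ∃ u x : ℝ → ℝ,
          Measurable u ∧ (∀ t, u t ∈ Icc (-1 : ℝ) 1) ∧ x τ = 0 ∧
          (∀ t ∈ Icc τ 1, HasDerivAt x (u t) t) ∧
          J = ∫ t in τ..1, (x t ^ 2 - u t ^ 2)} :=
        ⟨u, x, hu_meas, hu_mem, hx0, hderiv, rfl⟩
      have := hc hmem
      linarith
  · rintro ⟨u, x, hu_meas, hu_mem, hx0, hderiv, hJ⟩
    obtain ⟨hx2i, hu2i, hxc⟩ := hfacts u x hu_meas hu_mem hderiv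
    have hsplit : (∫ t in τ..1, (x t ^ 2 - u t ^ 2))
        = (∫ t in τ..1, x t ^ 2) - ∫ t in τ..1, u t ^ 2 :=
      intervalIntegral.integral_sub hx2i hu2i
    have hI2le : (∫ t in τ..1, u t ^ 2) ≤ 1 - τ := by
      have h1 : ∀ t ∈ Icc τ 1, u t ^ 2 ≤ 1 := by
        intro t _
        obtain ⟨h1, h2⟩ := hu_mem t
        nlinarith
      calc (∫ t in τ..1, u t ^ 2) ≤ ∫ _ in τ..1, (1:ℝ) :=
            intervalIntegral.integral_mono_on hτ1 hu2i intervalIntegrable_const h1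
        _ = 1 - τ := by rw [intervalIntegral.integral_const, smul_eq_mul]; ring
    have hI1nonneg : 0 ≤ ∫ t in τ..1, x t ^ 2 :=
      intervalIntegral.integral_nonneg hτ1 (fun t _ => sq_nonneg _)
    have hI1zero : (∫ t in τ..1, x t ^ 2) = 0 := by
      rw [hsplit] at hJ
      linarith
    -- x vanishes on the open interval
    have hxzero : ∀ t ∈ Ioo τ 1, x t = 0 := by
      intro t ht
      by_contra hne
      have hpos : 0 < ∫ t in τ..1, x t ^ 2 := by
        apply intervalIntegral.integral_pos hτ.2 (hxc.pow 2)
          (fun s _ => sq_nonneg _)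
        exact ⟨t, ⟨ht.1.le, ht.2.le⟩, sq_pos_of_ne_zero hne⟩
      linarith
    -- hence u vanishes on the open interval
    have huzero : ∀ t ∈ Ioo τ 1, u t = 0 := by
      intro t ht
      have hx_ev : x =ᶠ[nhds t] fun _ => 0 :=
        Filter.eventuallyEq_of_mem (isOpen_Ioo.mem_nhds ht) hxzero
      have h0 : HasDerivAt x 0 t :=
        (hasDerivAt_const t (0:ℝ)).congr_of_eventuallyEq hx_ev
      exact (hderiv t ⟨ht.1.le, ht.2.le⟩).unique h0
    -- so the integral of u² is zero
    have hI2zero : (∫ t in τ..1, u t ^ 2) = 0 := by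
      have hae : ∀ᵐ s : ℝ, s ∈ uIoc τ 1 → u s ^ 2 = (fun _ => (0:ℝ)) s := by
        have h1 : ∀ᵐ s : ℝ, s ≠ (1:ℝ) := by
          rw [Filter.eventually_iff, MeasureTheory.mem_ae_iff]
          have hset : {s : ℝ | s ≠ (1:ℝ)}ᶜ = {(1:ℝ)} := by ext s; simp
          rw [hset]
          exact Real.volume_singleton
        filter_upwards [h1] with s hs hmem
        rw [uIoc_of_le hτ1] at hmem
        have : s ∈ Ioo τ 1 := ⟨hmem.1, lt_of_le_of_ne hmem.2 hs⟩
        simp [huzero s this]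
      calc (∫ t in τ..1, u t ^ 2) = ∫ _ in τ..1, (0:ℝ) :=
            intervalIntegral.integral_congr_ae hae
        _ = 0 := by simp
    rw [hsplit, hI1zero, hI2zero] at hJ
    have := hτ.2
    linarith
end

section
/- For any measurable control u: [τ,1] → [-1,1] and ε > 0, there exists a measurable control (e.g., a rapidly oscillating bang-bang control) whose trajectory from x(τ) = 0 yields cost ∫_τ^1 (x² − u²)dt < τ − 1 + ε; hence the value function of this problem at (0,τ) equals τ − 1. -/
open Set

open intervalIntegral Real

noncomputable def cl (y : ℝ) : ℝ := max (-1) (min 1 y)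

lemma cl_mem (y : ℝ) : cl y ∈ Icc (-1:ℝ) 1 := by
  unfold cl
  exact ⟨le_max_left _ _, max_le (by norm_num) (min_le_left _ _)⟩

lemma cl_neg (y : ℝ) : cl (-y) = - cl y := by
  unfold cl
  rcases le_total y (-1) with h | h
  · rcases le_total y 1 with h' | h' <;> simp [max_def, min_def] <;> split_ifs <;> linarith
  · rcases le_total y 1 with h' | h' <;> simp [max_def, min_def] <;> split_ifs <;> linarith

lemma continuous_cl : Continuous cl :=
  continuous_const.max (continuous_const.min continuous_id)

lemma cl_one_sub_sq {k : ℕ} (hk : 1 ≤ k) {y : ℝ} (hy : |y| ≤ 1) :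
    1 - cl ((k:ℝ) * y) ^ 2 ≤ (1 - y ^ 2) ^ k := by
  have hy2 : y ^ 2 ≤ 1 := by
    have := abs_le.mp hy; nlinarith
  have hpos : (0:ℝ) ≤ (1 - y ^ 2) ^ k := pow_nonneg (by linarith) k
  rcases le_total 1 ((k:ℝ) * y) with h | h
  · have hcl : cl ((k:ℝ)*y) = 1 := by
      unfold cl; rw [min_eq_left h, max_eq_right (by norm_num : (-1:ℝ) ≤ 1)]
    rw [hcl]; simpa using hpos
  · rcases le_total ((k:ℝ)*y) (-1) with h2 | h2
    · have hcl : cl ((k:ℝ)*y) = -1 := by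
        unfold cl; rw [min_eq_right (by linarith), max_eq_left h2]
      rw [hcl]; simpa using hpos
    · have hcl : cl ((k:ℝ)*y) = (k:ℝ)*y := by
        unfold cl; rw [min_eq_right h, max_eq_right h2]
      rw [hcl]
      have hk' : (1:ℝ) ≤ (k:ℝ) := by exact_mod_cast hk
      have bern := one_add_mul_le_pow (a := -(y^2)) (by nlinarith) k
      have h1 : (1 + -(y^2) : ℝ) = 1 - y^2 := by ring
      rw [h1] at bern
      nlinarith [sq_nonneg y, sq_nonneg ((k:ℝ)*y)]

lemma cos_pow_integral_le (k : ℕ) :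
    ∫ x in (0:ℝ)..π, Real.cos x ^ (2*k) ≤ π / Real.sqrt (k+1) := by
  induction k with
  | zero => simp [Real.sqrt_one, pi_pos.le]
  | succ k ih =>
    have hrec := integral_cos_pow (a := 0) (b := π) (n := 2*k)
    have h2 : 2*(k+1) = 2*k+2 := by ring
    rw [h2, hrec]
    simp only [Real.sin_pi, Real.sin_zero, mul_zero, zero_mul, sub_zero, zero_sub, neg_zero,
      zero_div, zero_add]
    have ha : (0:ℝ) < Real.sqrt (k+1) := Real.sqrt_pos.mpr (by positivity)
    have hb : (0:ℝ) < Real.sqrt (k+2) := Real.sqrt_pos.mpr (by positivity)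
    have ha2 : Real.sqrt (k+1) ^ 2 = (k:ℝ)+1 := Real.sq_sqrt (by positivity)
    have hb2 : Real.sqrt (k+2) ^ 2 = (k:ℝ)+2 := Real.sq_sqrt (by positivity)
    have key : ((2*k:ℝ)+1) * Real.sqrt (k+2) ≤ ((2*k:ℝ)+2) * Real.sqrt (k+1) := by
      nlinarith [mul_pos ha hb, sq_nonneg (Real.sqrt (k+1) - Real.sqrt (k+2)),
        sq_nonneg (((2*k:ℝ)+2) * Real.sqrt (k+1) - ((2*k:ℝ)+1) * Real.sqrt (k+2))]
    calc (↑(2*k)+1)/(↑(2*k)+2) * ∫ x in (0:ℝ)..π, Real.cos x ^ (2*k)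
        ≤ ((2*k:ℝ)+1)/((2*k:ℝ)+2) * (π / Real.sqrt (k+1)) := by
          push_cast
          exact mul_le_mul_of_nonneg_left ih (by positivity)
      _ ≤ π / Real.sqrt ((k:ℝ)+1+1) := by
          have hcast : ((k:ℝ)+1+1) = (k:ℝ)+2 := by ring
          rw [hcast, div_mul_div_comm, div_le_div_iff₀ (by positivity) hb]
          nlinarith [key, pi_pos.le, mul_le_mul_of_nonneg_left key pi_pos.le]
      _ = π / Real.sqrt ((k+1:ℕ)+1) := by norm_cast

set_option maxHeartbeats 2000000 in
lemma construction (τ : ℝ) (hτ0 : 0 ≤ τ) (hτ1 : τ < 1) {ε : ℝ} (hε : 0 < ε) :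
    ∃ u x : ℝ → ℝ, Measurable u ∧ (∀ t, u t ∈ Icc (-1 : ℝ) 1) ∧
      x τ = 0 ∧ (∀ t ∈ Icc τ 1, HasDerivAt x (u t) t) ∧
      (∫ t in τ..1, (x t ^ 2 - u t ^ 2)) < τ - 1 + ε := by
  -- choose k
  obtain ⟨k0, hk0⟩ := exists_nat_gt ((4*π/ε)^2)
  set k : ℕ := k0 + 1 with hk_def
  have hk1 : 1 ≤ k := Nat.le_add_left 1 k0
  have hsqrt_pos : (0:ℝ) < Real.sqrt (k+1) := Real.sqrt_pos.mpr (by positivity)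
  have h4πε : (0:ℝ) < 4*π/ε := by positivity
  have hlt : 4*π/ε < Real.sqrt (k+1) := by
    rw [show ((k:ℝ)+1) = ((k+1:ℕ):ℝ) by push_cast; ring] at *
    refine (Real.lt_sqrt (by positivity)).mpr ?_
    push_cast
    push_cast [hk_def] at *
    linarith
  have hkB : π / Real.sqrt (k+1) < ε/4 := by
    have h1 : π / Real.sqrt (k+1) < π / (4*π/ε) :=
      div_lt_div_of_pos_left pi_pos h4πε hlt
    have h2 : π / (4*π/ε) = ε/4 := by
      field_simp
    linarith
  set B : ℝ := ∫ x in (0:ℝ)..π, Real.cos x ^ (2*k) with hB_def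
  have hB : B ≤ π / Real.sqrt (k+1) := cos_pow_integral_le k
  have hBnn : 0 ≤ B := by
    apply intervalIntegral.integral_nonneg pi_pos.le
    intro s _
    rw [pow_mul]
    positivity
  have hB2 : 2*B < ε/2 := by linarith
  -- choose N
  set δ : ℝ := Real.sqrt (ε/2) with hδ_def
  have hδ : 0 < δ := Real.sqrt_pos.mpr (by positivity)
  obtain ⟨N0, hN0⟩ := exists_nat_gt (max 1 (2*π/δ))
  set N : ℝ := (N0:ℝ) with hN_def
  have hN1 : (1:ℝ) ≤ N := le_of_lt (lt_of_le_of_lt (le_max_left _ _) hN0)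
  have hNpos : (0:ℝ) < N := by linarith
  have hNδ : 2*π/N < δ := by
    have h' : 2*π/δ < N := lt_of_le_of_lt (le_max_right _ _) hN0
    have h2 : 2*π < N*δ := by
      have := (div_lt_iff₀ hδ).mp h'
      linarith [this]
    rw [div_lt_iff₀ hNpos]
    linarith [mul_comm N δ]
  set c : ℝ := π/N with hc_def
  have hc : 0 < c := by positivity
  have hNsq : (2*c)^2 < ε/2 := by
    have h1 : 2*c = 2*π/N := by rw [hc_def]; ring
    have h2 : (2*c)^2 < δ^2 := by
      rw [h1]
      exact pow_lt_pow_left₀ hNδ (by positivity) (by norm_num)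
    have h3 : δ^2 = ε/2 := Real.sq_sqrt (by positivity)
    linarith
  -- the control
  set u : ℝ → ℝ := fun t => cl ((k:ℝ) * Real.sin (N * t)) with hu_def
  have hu_cont : Continuous u := by
    apply continuous_cl.comp
    fun_prop
  have hu_int : ∀ a b : ℝ, IntervalIntegrable u MeasureTheory.volume a b :=
    fun a b => hu_cont.intervalIntegrable a b
  have hu_mem : ∀ t, u t ∈ Icc (-1:ℝ) 1 := fun t => cl_mem _
  have hu_abs : ∀ t, |u t| ≤ 1 := fun t => abs_le.mpr ⟨(hu_mem t).1, (hu_mem t).2⟩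
  have hNc : ∀ t : ℝ, N * (t + c) = N * t + π := by
    intro t
    rw [hc_def]
    field_simp
  have hu_anti : ∀ t, u (t + c) = - u t := by
    intro t
    simp only [hu_def]
    rw [hNc t, Real.sin_antiperiodic (N*t)]
    rw [show (k:ℝ) * -Real.sin (N*t) = -((k:ℝ) * Real.sin (N*t)) by ring, cl_neg]
  have hu_per : Function.Periodic u (2*c) := by
    intro t
    have h1 := hu_anti (t + c)
    have h2 := hu_anti t
    rw [show t + 2*c = (t + c) + c by ring, h1, h2, neg_neg]
  have hzero : ∀ a : ℝ, ∫ s in a..a+2*c, u s = 0 := by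
    intro a
    have hsplit : (∫ s in a..a+c, u s) + ∫ s in a+c..a+c+c, u s = ∫ s in a..a+c+c, u s :=
      integral_add_adjacent_intervals (hu_int _ _) (hu_int _ _)
    have e1 : ∫ s in a..a+c, u (s + c) = ∫ s in a+c..a+c+c, u s :=
      integral_comp_add_right u c
    have e2 : ∫ s in a..a+c, u (s + c) = - ∫ s in a..a+c, u s := by
      simp only [hu_anti]
      exact integral_neg
    rw [show a + 2*c = a+c+c by ring, ← hsplit, ← e1, e2]
    ring
  -- the trajectory
  set x : ℝ → ℝ := fun t => ∫ s in τ..t, u s with hx_def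
  have hx0 : x τ = 0 := integral_same
  have hx_deriv : ∀ t : ℝ, HasDerivAt x (u t) t :=
    fun t => (hu_cont.integral_hasStrictDerivAt τ t).hasDerivAt
  have hx_diff : Differentiable ℝ x := fun t => (hx_deriv t).differentiableAt
  have hx_cont : Continuous x := hx_diff.continuous
  have hx_per : Function.Periodic x (2*c) := by
    intro t
    have hadj : (∫ s in τ..t, u s) + ∫ s in t..t+2*c, u s = ∫ s in τ..t+2*c, u s :=
      integral_add_adjacent_intervals (hu_int _ _) (hu_int _ _)
    simp only [hx_def]
    rw [← hadj, hzero t, add_zero]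
  have hx_bd : ∀ t : ℝ, |x t| ≤ 2*c := by
    intro t
    set m : ℤ := ⌊(t - τ)/(2*c)⌋ with hm_def
    have h2c : (0:ℝ) < 2*c := by positivity
    have hfl1 : (m:ℝ) ≤ (t - τ)/(2*c) := Int.floor_le _
    have hfl2 : (t - τ)/(2*c) < m + 1 := Int.lt_floor_add_one _
    have ht1 : τ ≤ t - m*(2*c) := by
      have h := mul_le_mul_of_nonneg_right hfl1 h2c.le
      rw [div_mul_cancel₀ _ h2c.ne'] at h
      linarith
    have ht2 : t - m*(2*c) ≤ τ + 2*c := by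
      have h := mul_le_mul_of_nonneg_right hfl2.le h2c.le
      rw [div_mul_cancel₀ _ h2c.ne'] at h
      nlinarith
    have hper : x (t - m • (2*c)) = x t := hx_per.sub_zsmul_eq m
    rw [zsmul_eq_mul] at hper
    have hb : ‖∫ s in τ..(t - m*(2*c)), u s‖ ≤ 1 * |t - m*(2*c) - τ| :=
      intervalIntegral.norm_integral_le_of_norm_le_const
        (fun s _ => by simpa using hu_abs s)
    rw [← hper]
    simp only [hx_def]
    rw [show |(∫ s in τ..(t - ↑m*(2*c)), u s)| = ‖∫ s in τ..(t - ↑m*(2*c)), u s‖ from rfl]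
    calc ‖∫ s in τ..(t - ↑m*(2*c)), u s‖ ≤ 1 * |t - ↑m*(2*c) - τ| := hb
      _ = |t - ↑m*(2*c) - τ| := one_mul _
      _ ≤ 2*c := by rw [abs_of_nonneg (by linarith)]; linarith
  -- bound on ∫ x²
  have hxsq : ∫ t in τ..1, (x t)^2 ≤ (2*c)^2 := by
    have hmono : ∫ t in τ..1, (x t)^2 ≤ ∫ t in τ..1, (2*c)^2 := by
      apply intervalIntegral.integral_mono_on hτ1.le
        ((hx_cont.pow 2).intervalIntegrable τ 1) intervalIntegrable_const
      intro s _
      have h1 := hx_bd s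
      have h2 : |x s|^2 ≤ (2*c)^2 := pow_le_pow_left₀ (abs_nonneg _) h1 2
      rwa [sq_abs] at h2
    have hconst : ∫ t in τ..1, (2*c)^2 = (1 - τ) * (2*c)^2 := by
      rw [intervalIntegral.integral_const, smul_eq_mul]
    nlinarith [sq_nonneg (2*c)]
  -- the comparison function g
  set g : ℝ → ℝ := fun t => Real.cos (N*t) ^ (2*k) with hg_def
  have hg_cont : Continuous g := by fun_prop
  have hg_nonneg : ∀ t, 0 ≤ g t := by
    intro t
    simp only [hg_def]
    rw [pow_mul]
    positivity
  have hg_per : Function.Periodic g c := by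
    intro t
    simp only [hg_def]
    rw [hNc t, Real.cos_antiperiodic (N*t), pow_mul, pow_mul, neg_sq]
  have hpoint : ∀ t, 1 - (u t)^2 ≤ g t := by
    intro t
    have h1 := cl_one_sub_sq hk1 (y := Real.sin (N*t)) (abs_sin_le_one _)
    simp only [hu_def, hg_def]
    rw [pow_mul, Real.cos_sq']
    exact h1
  have hone : ∫ s in (0:ℝ)..c, g s = (1/N) * B := by
    have h := integral_comp_mul_left (a := (0:ℝ)) (b := c)
      (f := fun y => Real.cos y ^ (2*k)) (c := N) hNpos.ne'
    simp only [hg_def]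
    rw [h, mul_zero, show N * c = π by rw [hc_def]; field_simp, smul_eq_mul, hB_def]
    ring
  -- number of periods
  set m' : ℕ := ⌈N/π⌉₊ with hm'_def
  have hm'1 : N/π ≤ (m':ℝ) := Nat.le_ceil _
  have hm'2 : (m':ℝ) < N/π + 1 := Nat.ceil_lt_add_one (by positivity)
  have hcov : (1:ℝ) ≤ τ + m' * c := by
    have h1 : (N/π) * c ≤ (m':ℝ) * c := mul_le_mul_of_nonneg_right hm'1 hc.le
    have h2 : (N/π) * c = 1 := by rw [hc_def]; field_simp
    linarith
  -- bound on ∫ (1 - u²)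
  have hint_u2 : ∫ t in τ..1, (1 - (u t)^2) ≤ 2*B := by
    have step1 : ∫ t in τ..1, (1 - (u t)^2) ≤ ∫ t in τ..1, g t := by
      apply intervalIntegral.integral_mono_on hτ1.le
        ((continuous_const.sub (hu_cont.pow 2)).intervalIntegrable τ 1)
        (hg_cont.intervalIntegrable τ 1)
      exact fun s _ => hpoint s
    have step2 : ∫ t in τ..1, g t ≤ ∫ t in τ..(τ + m' * c), g t := by
      have hadj : (∫ t in τ..1, g t) + ∫ t in (1:ℝ)..(τ + m' * c), g t
          = ∫ t in τ..(τ + m' * c), g t :=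
        integral_add_adjacent_intervals (hg_cont.intervalIntegrable _ _)
          (hg_cont.intervalIntegrable _ _)
      have hnn : 0 ≤ ∫ t in (1:ℝ)..(τ + m' * c), g t :=
        intervalIntegral.integral_nonneg hcov (fun s _ => hg_nonneg s)
      linarith
    have step3 : ∫ t in τ..(τ + m' * c), g t = (m':ℝ) * ((1/N) * B) := by
      have hz := hg_per.intervalIntegral_add_zsmul_eq (m' : ℤ) τ
        (fun a b => hg_cont.intervalIntegrable a b)
      have hshift := hg_per.intervalIntegral_add_eq τ 0
      rw [zero_add] at hshift
      rw [show ((m':ℕ):ℝ) * c = ((m':ℤ):ℝ) * c by push_cast; ring, ← zsmul_eq_mul, hz,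
        hshift, hone, zsmul_eq_mul]
      push_cast
      ring
    have step4 : (m':ℝ) * ((1/N) * B) ≤ 2*B := by
      have hπ1 : (1:ℝ) ≤ π := by linarith [Real.pi_gt_three]
      have h1 : (m':ℝ) * (1/N) ≤ 1/π + 1/N := by
        have hmul := mul_le_mul_of_nonneg_right hm'2.le (by positivity : (0:ℝ) ≤ 1/N)
        have heq : (N/π + 1) * (1/N) = 1/π + 1/N := by
          field_simp
        linarith
      have h2 : (1:ℝ)/π + 1/N ≤ 2 := by
        have : (1:ℝ)/π ≤ 1 := by rw [div_le_one (by positivity)]; linarith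
        have : (1:ℝ)/N ≤ 1 := by rw [div_le_one hNpos]; linarith
        linarith [show (1:ℝ)/π ≤ 1 from by rw [div_le_one (by positivity)]; linarith]
      calc (m':ℝ) * ((1/N) * B) = ((m':ℝ) * (1/N)) * B := by ring
        _ ≤ (1/π + 1/N) * B := mul_le_mul_of_nonneg_right h1 hBnn
        _ ≤ 2 * B := mul_le_mul_of_nonneg_right h2 hBnn
    calc ∫ t in τ..1, (1 - (u t)^2) ≤ ∫ t in τ..1, g t := step1
      _ ≤ ∫ t in τ..(τ + m' * c), g t := step2
      _ = (m':ℝ) * ((1/N) * B) := step3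
      _ ≤ 2*B := step4
  -- cost decomposition
  have hcost : ∫ t in τ..1, ((x t)^2 - (u t)^2)
      = (∫ t in τ..1, (x t)^2) + (∫ t in τ..1, (1 - (u t)^2)) - (1-τ) := by
    have i1 : IntervalIntegrable (fun t => (x t)^2) MeasureTheory.volume τ 1 :=
      (hx_cont.pow 2).intervalIntegrable τ 1
    have i2 : IntervalIntegrable (fun t => 1 - (u t)^2) MeasureTheory.volume τ 1 :=
      (continuous_const.sub (hu_cont.pow 2)).intervalIntegrable τ 1
    have heq : (fun t => (x t)^2 - (u t)^2)
        = fun t => ((x t)^2 + (1 - (u t)^2)) - 1 := by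
      funext t; ring
    rw [heq, intervalIntegral.integral_sub (i1.add i2) intervalIntegrable_const,
      intervalIntegral.integral_add i1 i2, intervalIntegral.integral_const, smul_eq_mul]
    ring
  refine ⟨u, x, hu_cont.measurable, hu_mem, hx0, fun t _ => hx_deriv t, ?_⟩
  rw [hcost]
  linarith

/-- For every `ε > 0` there is a measurable admissible control (e.g. a rapidly
oscillating bang-bang control) whose trajectory from `x(τ) = 0` has cost
`∫_τ^1 (x² − u²) dt < τ − 1 + ε`; consequently the value function of the problem
`ẋ = u`, `u ∈ [-1,1]`, cost `∫_τ^1 (x² − u²) dt`, at `(0,τ)` equals `τ − 1`. -/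
theorem value_function_at_zero (τ : ℝ) (hτ : τ ∈ Ico (0 : ℝ) 1) :
    (∀ ε > 0, ∃ u x : ℝ → ℝ, Measurable u ∧ (∀ t, u t ∈ Icc (-1 : ℝ) 1) ∧
      x τ = 0 ∧ (∀ t ∈ Icc τ 1, HasDerivAt x (u t) t) ∧
      (∫ t in τ..1, (x t ^ 2 - u t ^ 2)) < τ - 1 + ε) ∧
    IsGLB {J : ℝ | ∃ u x : ℝ → ℝ, Measurable u ∧ (∀ t, u t ∈ Icc (-1 : ℝ) 1) ∧
        x τ = 0 ∧ (∀ t ∈ Icc τ 1, HasDerivAt x (u t) t) ∧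
        J = ∫ t in τ..1, (x t ^ 2 - u t ^ 2)} (τ - 1) := by
  obtain ⟨hτ0, hτ1⟩ := hτ
  have main : ∀ ε > 0, ∃ u x : ℝ → ℝ, Measurable u ∧ (∀ t, u t ∈ Icc (-1 : ℝ) 1) ∧
      x τ = 0 ∧ (∀ t ∈ Icc τ 1, HasDerivAt x (u t) t) ∧
      (∫ t in τ..1, (x t ^ 2 - u t ^ 2)) < τ - 1 + ε :=
    fun ε hε => construction τ hτ0 hτ1 hε
  refine ⟨main, ?_, ?_⟩
  · -- lower bound
    rintro J ⟨u, x, hu_meas, hu_mem, -, hderiv, rfl⟩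
    have hτ1' : τ ≤ 1 := hτ1.le
    have hxc : ContinuousOn x (Icc τ 1) :=
      fun t ht => (hderiv t ht).continuousAt.continuousWithinAt
    have hx2 : IntervalIntegrable (fun t => x t ^ 2) MeasureTheory.volume τ 1 := by
      apply ContinuousOn.intervalIntegrable
      rw [uIcc_of_le hτ1']
      exact hxc.pow 2
    have hu_abs : ∀ t, |u t| ≤ 1 := fun t => abs_le.mpr ⟨(hu_mem t).1, (hu_mem t).2⟩
    have hu2 : IntervalIntegrable (fun t => u t ^ 2) MeasureTheory.volume τ 1 := by
      rw [intervalIntegrable_iff]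
      apply MeasureTheory.Integrable.mono'
        (MeasureTheory.integrableOn_const (C := (1:ℝ)) measure_Ioc_lt_top.ne)
      · exact ((hu_meas.pow_const 2).aestronglyMeasurable).restrict
      · filter_upwards with t
        have h1 := hu_abs t
        rw [Real.norm_eq_abs, abs_pow]
        calc |u t| ^ 2 ≤ 1 ^ 2 := pow_le_pow_left₀ (abs_nonneg _) h1 2
          _ = 1 := one_pow 2
    have hmono : ∫ t in τ..1, (-1 : ℝ) ≤ ∫ t in τ..1, (x t ^ 2 - u t ^ 2) := by
      apply intervalIntegral.integral_mono_on hτ1' intervalIntegrable_const (hx2.sub hu2)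
      intro s _
      have h1 := hu_abs s
      have h2 : u s ^ 2 ≤ 1 := by
        rw [← sq_abs]
        calc |u s| ^ 2 ≤ 1 ^ 2 := pow_le_pow_left₀ (abs_nonneg _) h1 2
          _ = 1 := one_pow 2
      nlinarith [sq_nonneg (x s)]
    have hconst : ∫ t in τ..1, (-1 : ℝ) = τ - 1 := by
      rw [intervalIntegral.integral_const, smul_eq_mul]
      ring
    rw [hconst] at hmono
    exact hmono
  · -- greatest lower bound
    intro b hb
    apply le_of_forall_pos_le_add
    intro ε hε
    obtain ⟨u, x, h1, h2, h3, h4, h5⟩ := main ε hε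
    have hmem : (∫ t in τ..1, (x t ^ 2 - u t ^ 2)) ∈
        {J : ℝ | ∃ u x : ℝ → ℝ, Measurable u ∧ (∀ t, u t ∈ Icc (-1 : ℝ) 1) ∧
          x τ = 0 ∧ (∀ t ∈ Icc τ 1, HasDerivAt x (u t) t) ∧
          J = ∫ t in τ..1, (x t ^ 2 - u t ^ 2)} :=
      ⟨u, x, h1, h2, h3, h4, rfl⟩
    have := hb hmem
    linarith
end
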